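/- Let M be the monoid of trust triples under sequential aggregation, and let C be an n×n trust matrix over T with C_ii = ⟨1,0,0⟩ and C_ij = ⟨0,0,1⟩ when there is no edge, defined from a finite DAG G. Define the modified matrix product N = C*M by N_ij = Σ_{k≠j} C_ik · M_kj for i ≠ j (sum being parallel aggregation '+') and N_ii = ⟨1,0,0⟩. Then the sequence of powers C, C², C³, … (under *) is eventually constant: C^t = C^ℓ for all t ≥ ℓ, where ℓ is the length of the longest directed path in G. -/

import Mathlib

/-- The set of trust triples. -/
def Tset : Set (ℝ × ℝ × ℝ) :=
  {x | 0 ≤ x.1 ∧ 0 ≤ x.2.1 ∧ 0 ≤ x.2.2 ∧ x.1 + x.2.1 + x.2.2 = 1}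

/-- Sequential aggregation "." on trust triples (identity `⟨1,0,0⟩`). -/
def seqMul (x y : ℝ × ℝ × ℝ) : ℝ × ℝ × ℝ :=
  (x.1 * y.1 + x.2.1 * y.2.1,
   x.1 * y.2.1 + x.2.1 * y.1,
   1 - x.1 * y.1 - x.1 * y.2.1 - x.2.1 * y.2.1 - x.2.1 * y.1)

/-- Parallel aggregation "+" on trust triples (identity `⟨0,1,0⟩`). -/
def parAdd (x y : ℝ × ℝ × ℝ) : ℝ × ℝ × ℝ :=
  (x.1 + y.1 - x.1 * y.1,
   x.2.1 * y.2.1,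
   (1 - x.1) * (1 - y.1) - x.2.1 * y.2.1)

/-- Parallel aggregation of a list of trust triples. -/
def parSum (l : List (ℝ × ℝ × ℝ)) : ℝ × ℝ × ℝ := l.foldr parAdd (0, 1, 0)

/-- The modified trust matrix product: `(A*B)_ij = Σ_{k ≠ j} A_ik · B_kj`
(the sum being parallel aggregation) for `i ≠ j`, and `(A*B)_ii = ⟨1,0,0⟩`. -/
noncomputable def tMatMul {n : ℕ} (A B : Fin n → Fin n → ℝ × ℝ × ℝ) :
    Fin n → Fin n → ℝ × ℝ × ℝ := fun i j =>
  if i = j then (1, 0, 0)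
  else parSum (((Finset.univ.erase j).toList).map fun k => seqMul (A i k) (B k j))

/-- Powers of a trust matrix under the modified product. -/
noncomputable def tpow {n : ℕ} (C : Fin n → Fin n → ℝ × ℝ × ℝ) : ℕ → Fin n → Fin n → ℝ × ℝ × ℝ
  | 0 => fun i j => if i = j then (1, 0, 0) else (0, 0, 1)
  | d + 1 => tMatMul (tpow C d) C

/-- `IsPathFrom r i j l` : `l` lists the intermediate vertices of a directed path
`i → … → j`, which has `l.length + 1` edges. -/
def IsPathFrom {V : Type*} (r : V → V → Prop) (i j : V) (l : List V) : Prop :=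
  List.Chain r i (l ++ [j])

/-- for the trust matrix of a finite DAG, the sequence of powers
under the modified product is eventually constant: `C^t = C^ℓ` for all `t ≥ ℓ`,
where `ℓ` is the length of the longest directed path of the DAG. -/
lemma seqMul_right_dist (x : ℝ × ℝ × ℝ) : seqMul x ((0:ℝ), (0:ℝ), (1:ℝ)) = (0, 0, 1) := by
  simp [seqMul]

lemma seqMul_left_dist (y : ℝ × ℝ × ℝ) : seqMul ((0:ℝ), (0:ℝ), (1:ℝ)) y = (0, 0, 1) := by
  simp [seqMul]

lemma parSum_all_dist (l : List (ℝ × ℝ × ℝ)) (h : ∀ x ∈ l, x = (0,0,1)) (hne : l ≠ []) :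
    parSum l = (0, 0, 1) := by
  induction l with
  | nil => simp at hne
  | cons a t ih =>
    have ha : a = ((0:ℝ),(0:ℝ),(1:ℝ)) := h a (by simp)
    rcases eq_or_ne t [] with ht | ht
    · subst ht ha; simp [parSum, parAdd]
    · have := ih (fun x hx => h x (by simp [hx])) ht
      show parAdd a (parSum t) = _
      rw [this, ha]; simp [parAdd]

lemma tpow_diag {n : ℕ} (C : Fin n → Fin n → ℝ × ℝ × ℝ) (d : ℕ) (i : Fin n) :
    tpow C d i i = (1, 0, 0) := by
  cases d with
  | zero => simp [tpow]
  | succ m => simp [tpow, tMatMul]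

lemma key {n : ℕ} (r : Fin n → Fin n → Prop) (C : Fin n → Fin n → ℝ × ℝ × ℝ)
    (hnoedge : ∀ i j, i ≠ j → ¬ r i j → C i j = (0, 0, 1)) :
    ∀ d (i j : Fin n), (∀ l, IsPathFrom r i j l → l.length + 1 ≤ d) →
      tpow C (d+1) i j = tpow C d i j := by
  intro d
  induction d with
  | zero =>
    intro i j hP
    rcases eq_or_ne i j with rfl | hij
    · rw [tpow_diag, tpow_diag]
    · have hnr : ¬ r i j := by
        intro h
        have := hP [] (by simpa [IsPathFrom, List.Chain] using h)
        omega
      have h0 : tpow C 0 i j = ((0:ℝ),(0:ℝ),(1:ℝ)) := by simp [tpow, hij]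
      rw [h0]
      show tMatMul (tpow C 0) C i j = _
      rw [tMatMul, if_neg hij]
      apply parSum_all_dist
      · intro x hx
        simp only [List.mem_map] at hx
        obtain ⟨k, hk, rfl⟩ := hx
        rcases eq_or_ne k i with rfl | hki
        · rw [tpow_diag, hnoedge _ _ hij hnr]
          simp [seqMul]
        · have : tpow C 0 i k = ((0:ℝ),(0:ℝ),(1:ℝ)) := by
            simp [tpow, (Ne.symm hki)]
          rw [this, seqMul_left_dist]
      · have : i ∈ (Finset.univ.erase j).toList := by
          simp [Finset.mem_toList, hij]
        intro h
        rw [List.map_eq_nil_iff] at h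
        rw [h] at this; simp at this
  | succ m ih =>
    intro i j hP
    rcases eq_or_ne i j with rfl | hij
    · rw [tpow_diag, tpow_diag]
    · show tMatMul (tpow C (m+1)) C i j = tMatMul (tpow C m) C i j
      rw [tMatMul, tMatMul, if_neg hij, if_neg hij]
      congr 1
      apply List.map_congr_left
      intro k hk
      have hkj : k ≠ j := by
        simp [Finset.mem_toList] at hk; exact hk
      by_cases hr : r k j
      · rcases eq_or_ne k i with rfl | hki
        · rw [tpow_diag, tpow_diag]
        · have heq : tpow C (m+1) i k = tpow C m i k := by
            apply ih
            intro l hl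
            have hpath : IsPathFrom r i j (l ++ [k]) := by
              unfold IsPathFrom at hl ⊢
              have : l ++ [k] ++ [j] = l ++ (k :: j :: []) := by simp
              rw [this]
              exact List.isChain_cons_append_cons_cons.mpr ⟨hl, hr, List.IsChain.singleton _⟩
            have := hP (l ++ [k]) hpath
            simp at this
            omega
          rw [heq]
      · rw [hnoedge k j hkj hr, seqMul_right_dist, seqMul_right_dist]

theorem tpow_eventually_constant' {n : ℕ}
    (r : Fin n → Fin n → Prop)
    (C : Fin n → Fin n → ℝ × ℝ × ℝ)
    (hnoedge : ∀ i j, i ≠ j → ¬ r i j → C i j = (0, 0, 1))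
    (ℓ : ℕ)
    (hub : ∀ (i j : Fin n) (l : List (Fin n)), IsPathFrom r i j l → l.length + 1 ≤ ℓ) :
    ∀ t, ℓ ≤ t → tpow C t = tpow C ℓ := by
  intro t ht
  induction t, ht using Nat.le_induction with
  | base => rfl
  | succ m hm ihm =>
    show tMatMul (tpow C m) C = tpow C ℓ
    rw [ihm]
    have : tMatMul (tpow C ℓ) C = tpow C (ℓ+1) := rfl
    rw [this]
    funext i j
    exact key r C hnoedge ℓ i j (fun l hl => hub i j l hl)

theorem tpow_eventually_constant {n : ℕ}
    (r : Fin n → Fin n → Prop) (hacyclic : ∀ v, ¬ Relation.TransGen r v v)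
    (C : Fin n → Fin n → ℝ × ℝ × ℝ)
    (hT : ∀ i j, C i j ∈ Tset)
    (hdiag : ∀ i, C i i = (1, 0, 0))
    (hnoedge : ∀ i j, i ≠ j → ¬ r i j → C i j = (0, 0, 1))
    (ℓ : ℕ)
    (hub : ∀ (i j : Fin n) (l : List (Fin n)), IsPathFrom r i j l → l.length + 1 ≤ ℓ)
    (hach : ∃ (i j : Fin n) (l : List (Fin n)), IsPathFrom r i j l ∧ l.length + 1 = ℓ) :
    ∀ t, ℓ ≤ t → tpow C t = tpow C ℓ := by
  exact tpow_eventually_constant' r C hnoedge ℓ hub
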